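/- arXiv:2304.04823 — 2 statements merged into one kernel-verified Lean document; each statement's English description precedes it below -/
import Mathlib

section
/- For every ε ≥ 0, the function V_φ(ξ) = -½(1 + 2ε²) + (3/2)ε² sech²(ξ) satisfies the linear inhomogeneous equation L₋ V_φ = (1 - ε²d²/dξ²) φ', where L₋ = -d²/dξ² + 2tanh²(ξ) - 2 and φ'(ξ) = sech²(ξ); explicitly, -V_φ''(ξ) - 2 sech²(ξ) V_φ(ξ) = sech²(ξ) - ε² (sech²)''(ξ) for all real ξ. -/
lemma sech2_hasDeriv (x : ℝ) :
    HasDerivAt (fun x : ℝ => (1 / Real.cosh x) ^ 2)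
      (-2 * Real.sinh x / Real.cosh x ^ 3) x := by
  have h0 : Real.cosh x ≠ 0 := (Real.cosh_pos x).ne'
  have h1 : HasDerivAt (fun y => (Real.cosh y)⁻¹ ^ 2) _ x := ((Real.hasDerivAt_cosh x).inv h0).pow 2
  simp only [one_div]
  convert h1 using 1
  push_cast
  simp only [Pi.inv_apply]
  ring

lemma sech2_deriv2 (x : ℝ) :
    HasDerivAt (fun x : ℝ => -2 * Real.sinh x / Real.cosh x ^ 3)
      (4 * (1 / Real.cosh x) ^ 2 - 6 * (1 / Real.cosh x) ^ 4) x := by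
  have h0 : Real.cosh x ≠ 0 := (Real.cosh_pos x).ne'
  have h3 : Real.cosh x ^ 3 ≠ 0 := pow_ne_zero _ h0
  have h1 : HasDerivAt (fun y => -2 * Real.sinh y / Real.cosh y ^ 3) _ x := ((Real.hasDerivAt_sinh x).const_mul (-2 : ℝ)).div
      ((Real.hasDerivAt_cosh x).pow 3) h3
  convert h1 using 1
  have hs : Real.sinh x ^ 2 = Real.cosh x ^ 2 - 1 := by
    nlinarith [Real.cosh_sq_sub_sinh_sq x]
  push_cast
  field_simp
  linear_combination (-6) * hs

lemma deriv_sech2 : deriv (fun x : ℝ => (1 / Real.cosh x) ^ 2)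
    = fun x => -2 * Real.sinh x / Real.cosh x ^ 3 := by
  funext x; exact (sech2_hasDeriv x).deriv

lemma deriv2_sech2 (x : ℝ) :
    deriv (deriv (fun x : ℝ => (1 / Real.cosh x) ^ 2)) x
      = 4 * (1 / Real.cosh x) ^ 2 - 6 * (1 / Real.cosh x) ^ 4 := by
  rw [deriv_sech2]; exact (sech2_deriv2 x).deriv

/-- For every `ε ≥ 0`, the function `V_φ(ξ) = -½(1+2ε²) + (3/2)ε² sech²(ξ)` satisfies
`L₋ V_φ = (1 - ε² d²/dξ²) φ'` with `L₋ = -d²/dξ² - 2 sech²` and `φ'(ξ) = sech²(ξ)`. -/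
theorem Vphi_solves (ε : ℝ) (hε : 0 ≤ ε) :
    ∀ ξ : ℝ,
      -(deriv (deriv (fun x : ℝ =>
          -(1/2) * (1 + 2*ε^2) + (3/2) * ε^2 * (1 / Real.cosh x) ^ 2)) ξ)
        - 2 * (1 / Real.cosh ξ) ^ 2 *
            (-(1/2) * (1 + 2*ε^2) + (3/2) * ε^2 * (1 / Real.cosh ξ) ^ 2)
      = (1 / Real.cosh ξ) ^ 2
        - ε^2 * deriv (deriv (fun x : ℝ => (1 / Real.cosh x) ^ 2)) ξ := by
  intro ξ
  have hV : deriv (fun x : ℝ =>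
      -(1/2) * (1 + 2*ε^2) + (3/2) * ε^2 * (1 / Real.cosh x) ^ 2)
      = fun x => (3/2) * ε^2 * (-2 * Real.sinh x / Real.cosh x ^ 3) := by
    funext x
    exact (((sech2_hasDeriv x).const_mul ((3/2) * ε^2)).const_add _).deriv
  have hV2 : deriv (deriv (fun x : ℝ =>
      -(1/2) * (1 + 2*ε^2) + (3/2) * ε^2 * (1 / Real.cosh x) ^ 2)) ξ
      = (3/2) * ε^2 * (4 * (1 / Real.cosh ξ) ^ 2 - 6 * (1 / Real.cosh ξ) ^ 4) := by
    rw [hV]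
    exact ((sech2_deriv2 ξ).const_mul ((3/2) * ε^2)).deriv
  rw [hV2, deriv2_sech2]
  ring
end

section
/- With V_φ(ξ) = -½(1+2ε²) + (3/2)ε² sech²(ξ) and φ'(ξ) = sech²(ξ), the weighted inner product (φ', V_φ)_ε := ∫_ℝ [φ'(ξ)V_φ(ξ) + ε² φ''(ξ)V_φ'(ξ)] dξ equals -1 + (8/5)ε⁴. -/
open MeasureTheory

open Real Filter
private lemma hds (x : ℝ) :
    HasDerivAt (fun ξ : ℝ => (1 / Real.cosh ξ) ^ 2)
      (-2 * (Real.sinh x / Real.cosh x ^ 3)) x := by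
  have hc : Real.cosh x ≠ 0 := (Real.cosh_pos x).ne'
  have h1 : HasDerivAt (fun ξ : ℝ => (Real.cosh ξ)⁻¹)
      (-(Real.sinh x) / Real.cosh x ^ 2) x := (Real.hasDerivAt_cosh x).inv hc
  have h2 := h1.pow 2
  simp only [one_div]
  refine h2.congr_deriv ?_
  norm_num
  field_simp

private lemma hT (x : ℝ) :
    HasDerivAt (fun ξ : ℝ => Real.sinh ξ / Real.cosh ξ)
      (1 - (Real.sinh x / Real.cosh x) ^ 2) x := by
  have hc : Real.cosh x ≠ 0 := (Real.cosh_pos x).ne'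
  have h := (Real.hasDerivAt_sinh x).div (Real.hasDerivAt_cosh x) hc
  refine h.congr_deriv ?_
  field_simp

private lemma cosh_sq_ge (x : ℝ) : 1 + x ^ 2 ≤ Real.cosh x ^ 2 := by
  have h := Real.cosh_sq x
  have hs : x ^ 2 ≤ Real.sinh x ^ 2 := by
    rcases le_or_gt 0 x with hx | hx
    · rcases eq_or_lt_of_le hx with rfl | hx'
      · simp
      · have := Real.self_lt_sinh_iff.mpr hx'
        nlinarith
    · have h2 : Real.sinh x < x := by
        have := Real.self_lt_sinh_iff.mpr (neg_pos.mpr hx)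
        have hsn := Real.sinh_neg x
        nlinarith [Real.sinh_neg x]
      nlinarith
  nlinarith [Real.sinh_sq x]

private lemma tanh_top : Tendsto (fun x : ℝ => Real.sinh x / Real.cosh x) atTop (nhds 1) := by
  have heq : (fun x : ℝ => Real.sinh x / Real.cosh x)
      = fun x => (1 - Real.exp (-(2*x))) / (1 + Real.exp (-(2*x))) := by
    funext x
    rw [Real.sinh_eq, Real.cosh_eq]
    have h1 : Real.exp (-(2*x)) = Real.exp (-x) ^ 2 := by
      rw [← Real.exp_nat_mul]; ring_nf
    have h2 : Real.exp (-x) = (Real.exp x)⁻¹ := Real.exp_neg x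
    have he : Real.exp x ≠ 0 := (Real.exp_pos x).ne'
    have hd : Real.exp x + Real.exp (-x) ≠ 0 := by positivity
    rw [h1, h2]
    field_simp
  rw [heq]
  have h0 : Tendsto (fun x : ℝ => Real.exp (-(2*x))) atTop (nhds 0) := by
    apply Real.tendsto_exp_atBot.comp
    exact (tendsto_atBot_mono (fun x => le_refl _) (tendsto_neg_atTop_atBot.comp (tendsto_id.const_mul_atTop two_pos)))
  have hnum : Tendsto (fun x : ℝ => 1 - Real.exp (-(2*x))) atTop (nhds (1 - 0)) :=
    tendsto_const_nhds.sub h0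
  have hden : Tendsto (fun x : ℝ => 1 + Real.exp (-(2*x))) atTop (nhds (1 + 0)) :=
    tendsto_const_nhds.add h0
  have := hnum.div hden (by norm_num)
  rw [show ((1:ℝ) - 0) / (1 + 0) = 1 by norm_num] at this
  exact this

private lemma tanh_bot : Tendsto (fun x : ℝ => Real.sinh x / Real.cosh x) atBot (nhds (-1)) := by
  have h := tanh_top.comp tendsto_neg_atBot_atTop
  have heq : ((fun x : ℝ => Real.sinh x / Real.cosh x) ∘ fun x => -x)
      = fun x => -(Real.sinh x / Real.cosh x) := by
    funext x; simp [Real.sinh_neg, Real.cosh_neg, neg_div]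
  rw [heq] at h
  have := h.neg
  simpa using this

private lemma aux (ε : ℝ) :
    (∫ ξ : ℝ, ((1 / Real.cosh ξ) ^ 2 *
        (-(1/2) * (1 + 2*ε^2) + (3/2) * ε^2 * (1 / Real.cosh ξ) ^ 2) +
      ε^2 * deriv (fun ξ => (1 / Real.cosh ξ) ^ 2) ξ *
        deriv (fun ξ => -(1/2) * (1 + 2*ε^2) + (3/2) * ε^2 * (1 / Real.cosh ξ) ^ 2) ξ))
      = -1 + (8/5) * ε^4 := by
  have hd1 : deriv (fun ξ : ℝ => (1 / Real.cosh ξ) ^ 2)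
      = fun x => -2 * (Real.sinh x / Real.cosh x ^ 3) := funext fun x => (hds x).deriv
  have hdV : ∀ x : ℝ, HasDerivAt
      (fun ξ : ℝ => -(1/2) * (1 + 2*ε^2) + (3/2) * ε^2 * (1 / Real.cosh ξ) ^ 2)
      (-3 * ε^2 * (Real.sinh x / Real.cosh x ^ 3)) x := by
    intro x
    have h := ((hds x).const_mul ((3/2) * ε^2)).const_add (-(1/2) * (1 + 2*ε^2))
    refine h.congr_deriv ?_
    ring
  have hd2 : deriv (fun ξ : ℝ => -(1/2) * (1 + 2*ε^2) + (3/2) * ε^2 * (1 / Real.cosh ξ) ^ 2)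
      = fun x => -3 * ε^2 * (Real.sinh x / Real.cosh x ^ 3) := funext fun x => (hdV x).deriv
  rw [hd1, hd2]
  beta_reduce
  set g : ℝ → ℝ := fun ξ => (1 / Real.cosh ξ) ^ 2 *
        (-(1/2) * (1 + 2*ε^2) + (3/2) * ε^2 * (1 / Real.cosh ξ) ^ 2) +
      ε^2 * (-2 * (Real.sinh ξ / Real.cosh ξ ^ 3)) *
        (-3 * ε^2 * (Real.sinh ξ / Real.cosh ξ ^ 3)) with hg
  set F : ℝ → ℝ := fun x => (-1/2 + ε^2/2) * (Real.sinh x / Real.cosh x) +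
      ((2*ε^4 - ε^2/2) * (Real.sinh x / Real.cosh x) ^ 3 +
       (-(6/5)*ε^4) * (Real.sinh x / Real.cosh x) ^ 5) with hFdef
  have hF : ∀ x : ℝ, HasDerivAt F (g x) x := by
    intro x
    have hc : Real.cosh x ≠ 0 := (Real.cosh_pos x).ne'
    have h := ((hT x).const_mul (-1/2 + ε^2/2)).add
      ((((hT x).pow 3).const_mul (2*ε^4 - ε^2/2)).add
        (((hT x).pow 5).const_mul (-(6/5)*ε^4)))
    refine h.congr_deriv ?_
    have h1 : (1 / Real.cosh x) ^ 2 = 1 - (Real.sinh x / Real.cosh x) ^ 2 := by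
      field_simp
      linarith [Real.cosh_sq_sub_sinh_sq x]
    have h2 : Real.sinh x / Real.cosh x ^ 3
        = (Real.sinh x / Real.cosh x) * (1 - (Real.sinh x / Real.cosh x) ^ 2) := by
      field_simp
      rw [Real.cosh_sq_sub_sinh_sq]
      ring
    symm
    rw [hg]
    simp only [h1, h2]
    push_cast
    ring
  have hgint : Integrable g := by
    have hcont : Continuous g := by
      rw [hg]
      have hc : ∀ x : ℝ, Real.cosh x ≠ 0 := fun x => (Real.cosh_pos x).ne'
      fun_prop (disch := intros; first | exact (Real.cosh_pos _).ne' | positivity)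
    apply Integrable.mono'
      (integrable_inv_one_add_sq.const_mul ((1/2)*(1+2*ε^2) + (3/2)*ε^2 + 6*ε^4))
      hcont.aestronglyMeasurable
    filter_upwards with x
    have hc : (0:ℝ) < Real.cosh x := Real.cosh_pos x
    have hc1 : (1:ℝ) ≤ Real.cosh x := Real.one_le_cosh x
    have hu : (1 / Real.cosh x) ^ 2 = 1 / Real.cosh x ^ 2 := by rw [div_pow]; ring_nf
    set u : ℝ := (1 / Real.cosh x) ^ 2 with hudef
    set v : ℝ := Real.sinh x / Real.cosh x ^ 3 with hvdef
    have hu0 : 0 ≤ u := by positivity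
    have hu1 : u ≤ 1 := by
      rw [hudef, div_pow, one_pow]
      rw [div_le_one (by positivity)]
      nlinarith
    have hvu : v ^ 2 ≤ u ^ 2 := by
      rw [hvdef, hudef]
      rw [div_pow, div_pow, div_pow, one_pow]
      rw [div_le_div_iff₀ (by positivity) (by positivity)]
      have hs2 : Real.sinh x ^ 2 = Real.cosh x ^ 2 - 1 := by
        linarith [Real.cosh_sq_sub_sinh_sq x]
      nlinarith [sq_nonneg (Real.cosh x ^ 2), pow_pos hc 2, pow_pos hc 4]
    have huu : u^2 ≤ u := by nlinarith
    have hv2u : v^2 ≤ u := le_trans hvu huu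
    have hb1 : (3/2) * ε^2 * u^2 ≤ (3/2) * ε^2 * u := by
      have := mul_le_mul_of_nonneg_left huu (show (0:ℝ) ≤ (3/2)*ε^2 by positivity)
      linarith
    have hb2 : 6 * ε^4 * v^2 ≤ 6 * ε^4 * u := by
      have := mul_le_mul_of_nonneg_left hv2u (show (0:ℝ) ≤ 6*ε^4 by positivity)
      linarith
    have hb3 : (0:ℝ) ≤ (3/2) * ε^2 * u^2 := by positivity
    have hb4 : (0:ℝ) ≤ 6 * ε^4 * v^2 := by positivity
    have hb5 : (0:ℝ) ≤ (3/2) * ε^2 * u := by positivity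
    have hb6 : (0:ℝ) ≤ 6 * ε^4 * u := by positivity
    have hgx : g x = -(1/2) * (1 + 2*ε^2) * u + (3/2) * ε^2 * u^2 + 6 * ε^4 * v^2 := by
      rw [hg]; ring
    have hK : |g x| ≤ ((1/2)*(1+2*ε^2) + (3/2)*ε^2 + 6*ε^4) * u := by
      rw [hgx, abs_le]
      have hau : (0:ℝ) ≤ (1/2) * (1 + 2*ε^2) * u := by positivity
      constructor <;> linarith
    have hux : u ≤ (1 + x^2)⁻¹ := by
      rw [hudef, div_pow, one_pow, inv_eq_one_div]
      exact one_div_le_one_div_of_le (by positivity) (cosh_sq_ge x)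
    calc ‖g x‖ = |g x| := rfl
      _ ≤ ((1/2)*(1+2*ε^2) + (3/2)*ε^2 + 6*ε^4) * u := hK
      _ ≤ ((1/2)*(1+2*ε^2) + (3/2)*ε^2 + 6*ε^4) * (1 + x^2)⁻¹ := by
          apply mul_le_mul_of_nonneg_left hux (by positivity)
  have htop : Tendsto F atTop (nhds ((-1/2 + ε^2/2) * 1 +
      ((2*ε^4 - ε^2/2) * 1 ^ 3 + (-(6/5)*ε^4) * 1 ^ 5))) := by
    exact (tanh_top.const_mul _).add
      (((tanh_top.pow 3).const_mul _).add ((tanh_top.pow 5).const_mul _))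
  have hbot : Tendsto F atBot (nhds ((-1/2 + ε^2/2) * (-1) +
      ((2*ε^4 - ε^2/2) * (-1) ^ 3 + (-(6/5)*ε^4) * (-1) ^ 5))) := by
    exact (tanh_bot.const_mul _).add
      (((tanh_bot.pow 3).const_mul _).add ((tanh_bot.pow 5).const_mul _))
  have hval := integral_of_hasDerivAt_of_tendsto hF hgint hbot htop
  rw [hval]
  ring

/-- With `V_φ(ξ) = -½(1+2ε²) + (3/2)ε² sech²(ξ)` and `φ'(ξ) = sech²(ξ)`, the weighted
inner product `(φ',V_φ)_ε = ∫ [φ' V_φ + ε² φ'' V_φ'] dξ` equals `-1 + (8/5)ε⁴`. -/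
theorem weighted_inner_product_value (ε : ℝ) :
    let φ' : ℝ → ℝ := fun ξ => (1 / Real.cosh ξ) ^ 2
    let Vφ : ℝ → ℝ := fun ξ => -(1/2) * (1 + 2*ε^2) + (3/2) * ε^2 * (1 / Real.cosh ξ) ^ 2
    (∫ ξ : ℝ, (φ' ξ * Vφ ξ + ε^2 * deriv φ' ξ * deriv Vφ ξ)) = -1 + (8/5) * ε^4 := by
  exact aux ε
end
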